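/- Let n ≥ 2 be a positive integer and R = F_1 × ⋯ × F_n, where each F_i is a field. Then the maximum cardinality of a set S of non-trivial ideals of R such that no two distinct members of S are mutually maximally distant in G(R) equals 2^{n-1} − 1; that is, the independence number of the strong resolving graph satisfies β(G(R)_SR) = 2^{n-1} − 1. -/

import Mathlib

open SimpleGraph

/-- The type of non-trivial ideals of a commutative ring `R`
(ideals `I` with `I ≠ 0` and `I ≠ R`). -/
abbrev NontrivialIdeal (R : Type*) [CommRing R] : Type _ :=
  {I : Ideal R // I ≠ ⊥ ∧ I ≠ ⊤}

/-- The intersection graph of ideals of `R`: vertices are the non-trivial ideals,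
and distinct vertices are adjacent iff their intersection is non-zero. -/
def intersectionGraph (R : Type*) [CommRing R] : SimpleGraph (NontrivialIdeal R) where
  Adj I J := I ≠ J ∧ I.1 ⊓ J.1 ≠ ⊥
  symm := ⟨fun I J h => ⟨h.1.symm, by rw [inf_comm]; exact h.2⟩⟩
  loopless := ⟨fun I h => h.1 rfl⟩

/-- Two distinct vertices `u, v` are mutually maximally distant if
`d(v,w) ≤ d(u,v)` for every neighbour `w` of `u` and
`d(u,w) ≤ d(u,v)` for every neighbour `w` of `v`. -/
def MutuallyMaximallyDistant {V : Type*} (G : SimpleGraph V) (u v : V) : Prop :=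
  u ≠ v ∧ (∀ w, G.Adj u w → G.edist v w ≤ G.edist u v) ∧
    (∀ w, G.Adj v w → G.edist u w ≤ G.edist u v)

theorem MutuallyMaximallyDistant.symm {V : Type*} {G : SimpleGraph V} {u v : V}
    (h : MutuallyMaximallyDistant G u v) : MutuallyMaximallyDistant G v u :=
  ⟨h.1.symm,
    fun w hw => by rw [show G.edist v u = G.edist u v from G.edist_comm]; exact h.2.2 w hw,
    fun w hw => by rw [show G.edist v u = G.edist u v from G.edist_comm]; exact h.2.1 w hw⟩

/-- The strong resolving graph of `G`: `u` and `v` are adjacent iff they are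
mutually maximally distant. -/
def strongResolvingGraph {V : Type*} (G : SimpleGraph V) : SimpleGraph V where
  Adj := MutuallyMaximallyDistant G
  symm := ⟨fun _ _ h => h.symm⟩
  loopless := ⟨fun _ h => h.1 rfl⟩

/-- A vertex `w` strongly resolves `u` and `v` if `d(w,u) = d(w,v) + d(v,u)` or
`d(w,v) = d(w,u) + d(u,v)`. A set `W` is a strong resolving set if every two distinct
vertices are strongly resolved by some member of `W`. -/
def IsStrongResolvingSet {V : Type*} (G : SimpleGraph V) (W : Set V) : Prop :=
  ∀ u v : V, u ≠ v → ∃ w ∈ W,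
    G.edist w u = G.edist w v + G.edist v u ∨ G.edist w v = G.edist w u + G.edist u v

/-- The product ideal which is `Rᵢ` in the components where `I` is zero and `0` elsewhere. -/
def complIdeal {ι : Type*} (F : ι → Type*) [∀ i, CommRing (F i)] (I : Ideal (∀ i, F i)) :
    Ideal (∀ i, F i) where
  carrier := {x | ∀ i, I.map (Pi.evalRingHom F i) ≠ ⊥ → x i = 0}
  zero_mem' := fun i _ => rfl
  add_mem' := fun hx hy i hi => by
    simp only [Pi.add_apply, hx i hi, hy i hi, add_zero]
  smul_mem' := fun c x hx i hi => by
    simp only [Pi.smul_apply, smul_eq_mul, Pi.mul_apply, hx i hi, mul_zero]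


section Aux
variable {n : ℕ} {F : Fin n → Type*} [∀ i, Field (F i)]

def suppI (I : Ideal (∀ i, F i)) : Set (Fin n) :=
  {i | I.map (Pi.evalRingHom F i) ≠ ⊥}

lemma not_mem_suppI_iff {I : Ideal (∀ i, F i)} {i : Fin n} :
    i ∉ suppI I ↔ ∀ x ∈ I, x i = 0 := by
  simp only [suppI, Set.mem_setOf_eq, not_not, Ideal.map_eq_bot_iff_le_ker]
  exact ⟨fun h x hx => h hx, fun h x hx => h x hx⟩

lemma mem_iff_suppI {I : Ideal (∀ i, F i)} {x : ∀ i, F i} :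
    x ∈ I ↔ ∀ i, i ∉ suppI I → x i = 0 := by
  constructor
  · exact fun hx i hi => not_mem_suppI_iff.mp hi x hx
  · intro hx
    rw [← Finset.univ_sum_single x]
    refine Ideal.sum_mem _ fun i _ => ?_
    by_cases hi : i ∈ suppI I
    · obtain ⟨y, hy, hyi⟩ : ∃ y ∈ I, y i ≠ 0 := by
        by_contra h
        push_neg at h
        exact (not_mem_suppI_iff.mpr h) hi
      have hm : (Pi.single i (x i * (y i)⁻¹) : ∀ i, F i) * y ∈ I := I.mul_mem_left _ hy
      convert hm using 1
      funext j
      rcases eq_or_ne j i with rfl | hj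
      · simp [Pi.single_eq_same, mul_assoc, inv_mul_cancel₀ hyi]
      · simp [Pi.single_eq_of_ne hj]
    · rw [hx _ hi]
      simp

variable (F) in
def idealOf (A : Set (Fin n)) : Ideal (∀ i, F i) where
  carrier := {x | ∀ i ∉ A, x i = 0}
  zero_mem' := fun i _ => rfl
  add_mem' := fun hx hy i hi => by simp [Pi.add_apply, hx i hi, hy i hi]
  smul_mem' := fun c x hx i hi => by simp [hx i hi]

lemma mem_idealOf {A : Set (Fin n)} {x : ∀ i, F i} :
    x ∈ idealOf F A ↔ ∀ i ∉ A, x i = 0 := Iff.rfl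

lemma single_one_mem_idealOf {A : Set (Fin n)} {i : Fin n} (hi : i ∈ A) :
    (Pi.single i 1 : ∀ i, F i) ∈ idealOf F A := by
  intro j hj
  exact Pi.single_eq_of_ne (fun h => hj (by rw [h]; exact hi)) 1

lemma mem_suppI_iff {I : Ideal (∀ i, F i)} {i : Fin n} :
    i ∈ suppI I ↔ ∃ x ∈ I, x i ≠ 0 := by
  constructor
  · intro hi
    by_contra h
    push_neg at h
    exact not_mem_suppI_iff.mpr h hi
  · rintro ⟨x, hx, hxi⟩
    by_contra h
    exact hxi (not_mem_suppI_iff.mp h x hx)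

lemma suppI_idealOf (A : Set (Fin n)) : suppI (idealOf F A) = A := by
  ext i
  constructor
  · intro hi
    by_contra hiA
    exact (not_mem_suppI_iff.mpr (fun x hx => mem_idealOf.mp hx i hiA)) hi
  · intro hi
    refine mem_suppI_iff.mpr ⟨Pi.single i 1, single_one_mem_idealOf hi, ?_⟩
    rw [Pi.single_eq_same]
    exact one_ne_zero

lemma eq_idealOf_suppI (I : Ideal (∀ i, F i)) : I = idealOf F (suppI I) :=
  Ideal.ext fun _ => mem_iff_suppI

lemma suppI_injective : Function.Injective (suppI (F := F)) := fun I J h => by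
  rw [eq_idealOf_suppI I, eq_idealOf_suppI J, h]

lemma idealOf_ne_bot {A : Set (Fin n)} (hA : A.Nonempty) : idealOf F A ≠ ⊥ := by
  obtain ⟨i, hi⟩ := hA
  intro h
  have := single_one_mem_idealOf (F := F) hi
  rw [h, Ideal.mem_bot] at this
  have := congrFun this i
  rw [Pi.single_eq_same] at this
  exact one_ne_zero this

lemma idealOf_ne_top {A : Set (Fin n)} (hA : A ≠ Set.univ) : idealOf F A ≠ ⊤ := by
  obtain ⟨j, hj⟩ : ∃ j, j ∉ A := by
    by_contra h; push_neg at h; exact hA (Set.eq_univ_of_forall h)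
  intro h
  have : (1 : ∀ i, F i) ∈ idealOf F A := h ▸ Submodule.mem_top
  exact one_ne_zero (this j hj)

lemma suppI_nonempty {I : Ideal (∀ i, F i)} (h : I ≠ ⊥) : (suppI I).Nonempty := by
  rw [Set.nonempty_iff_ne_empty]
  intro he
  apply h
  rw [eq_idealOf_suppI I, he, eq_bot_iff]
  intro x hx
  rw [Ideal.mem_bot]
  funext i
  exact mem_idealOf.mp hx i (Set.notMem_empty i)

lemma suppI_ne_univ {I : Ideal (∀ i, F i)} (h : I ≠ ⊤) : suppI I ≠ Set.univ := by
  intro he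
  apply h
  rw [eq_idealOf_suppI I, he]
  exact Ideal.ext fun x => ⟨fun _ => trivial, fun _ i hi => absurd (Set.mem_univ i) hi⟩

lemma inf_eq_bot_iff_suppI {I J : Ideal (∀ i, F i)} :
    I ⊓ J = ⊥ ↔ suppI I ∩ suppI J = ∅ := by
  constructor
  · intro h
    rw [Set.eq_empty_iff_forall_notMem]
    rintro i ⟨hiI, hiJ⟩
    have hm : (Pi.single i 1 : ∀ i, F i) ∈ I ⊓ J := by
      constructor
      · exact mem_iff_suppI.mpr fun j hj => Pi.single_eq_of_ne (fun he => hj (by rw [he]; exact hiI)) 1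
      · exact mem_iff_suppI.mpr fun j hj => Pi.single_eq_of_ne (fun he => hj (by rw [he]; exact hiJ)) 1
    rw [h, Ideal.mem_bot] at hm
    have := congrFun hm i
    rw [Pi.single_eq_same] at this
    exact one_ne_zero this
  · intro h
    rw [eq_bot_iff]
    intro x hx
    rw [Ideal.mem_bot]
    funext i
    have : i ∉ suppI I ∨ i ∉ suppI J := by
      by_contra hc; push_neg at hc
      exact Set.eq_empty_iff_forall_notMem.mp h i ⟨hc.1, hc.2⟩
    rcases this with hi | hi
    · exact mem_iff_suppI.mp hx.1 i hi
    · exact mem_iff_suppI.mp hx.2 i hi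

end Aux

section GraphAux

lemma two_le_edist_of_not_adj {V : Type*} {G : SimpleGraph V} {u v : V}
    (hne : u ≠ v) (hna : ¬ G.Adj u v) : 2 ≤ G.edist u v := by
  have h0 : G.edist u v ≠ 0 := fun h => hne (SimpleGraph.edist_eq_zero_iff.mp h)
  have h1 : G.edist u v ≠ 1 := fun h => hna (SimpleGraph.edist_eq_one_iff_adj.mp h)
  have : (1 : ℕ∞) < G.edist u v :=
    lt_of_le_of_ne (Order.one_le_iff_pos.mpr (pos_iff_ne_zero.mpr h0)) (Ne.symm h1)
  calc (2 : ℕ∞) = 1 + 1 := by norm_num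
    _ ≤ G.edist u v := Order.add_one_le_of_lt this

variable {n : ℕ} {F : Fin n → Type*} [∀ i, Field (F i)]

lemma adj_iff {I J : NontrivialIdeal (∀ i, F i)} :
    (intersectionGraph (∀ i, F i)).Adj I J ↔
      I ≠ J ∧ (suppI I.1 ∩ suppI J.1).Nonempty := by
  rw [intersectionGraph]
  simp only [Set.nonempty_iff_ne_empty, ne_eq, ← inf_eq_bot_iff_suppI]

lemma vertex_ne_of_suppI_ne {I J : NontrivialIdeal (∀ i, F i)}
    (h : suppI I.1 ≠ suppI J.1) : I ≠ J := fun he => h (by rw [he])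

lemma vertex_eq_of_suppI_eq {I J : NontrivialIdeal (∀ i, F i)}
    (h : suppI I.1 = suppI J.1) : I = J := Subtype.ext (suppI_injective h)

/-- the vertex corresponding to a nonempty proper subset. -/
def vtx (F : Fin n → Type*) [∀ i, Field (F i)] (A : Set (Fin n))
    (h1 : A.Nonempty) (h2 : A ≠ Set.univ) : NontrivialIdeal (∀ i, F i) :=
  ⟨idealOf F A, idealOf_ne_bot h1, idealOf_ne_top h2⟩

@[simp] lemma suppI_vtx {A : Set (Fin n)} (h1 : A.Nonempty) (h2 : A ≠ Set.univ) :
    suppI (vtx F A h1 h2).1 = A := suppI_idealOf A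

/-- One half of the MMD property, under the disjointness assumption. -/
lemma mmd_half {I J : NontrivialIdeal (∀ i, F i)} (hne : I ≠ J)
    (hd : suppI I.1 ∩ suppI J.1 = ∅) :
    ∀ w, (intersectionGraph (∀ i, F i)).Adj I w →
      (intersectionGraph (∀ i, F i)).edist J w ≤
        (intersectionGraph (∀ i, F i)).edist I J := by
  set G := intersectionGraph (∀ i, F i)
  have hnadj : ¬ G.Adj I J := by
    rw [adj_iff]
    rintro ⟨-, hne'⟩
    rw [Set.nonempty_iff_ne_empty] at hne'
    exact hne' hd
  have h2 : 2 ≤ G.edist I J := two_le_edist_of_not_adj hne hnadj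
  intro w hw
  rcases eq_or_ne w J with rfl | hwJ
  · rw [SimpleGraph.edist_self]
    exact zero_le
  obtain ⟨hIw, a, haI, haw⟩ := adj_iff.mp hw
  by_cases hwJ2 : (suppI J.1 ∩ suppI w.1).Nonempty
  · refine le_trans ?_ h2
    rw [SimpleGraph.edist_eq_one_iff_adj.mpr (adj_iff.mpr ⟨(Ne.symm hwJ), hwJ2⟩)]
    norm_num
  · -- w's support is disjoint from J's
    rw [Set.not_nonempty_iff_eq_empty] at hwJ2
    obtain ⟨b, hbJ⟩ := suppI_nonempty J.2.1
    have hab : a ≠ b := fun h =>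
      Set.eq_empty_iff_forall_notMem.mp hd a ⟨haI, h ▸ hbJ⟩
    have hbw : b ∉ suppI w.1 := fun h =>
      Set.eq_empty_iff_forall_notMem.mp hwJ2 b ⟨hbJ, h⟩
    have hbI : b ∉ suppI I.1 := fun h =>
      Set.eq_empty_iff_forall_notMem.mp hd b ⟨h, hbJ⟩
    have haJ : a ∉ suppI J.1 := fun h =>
      Set.eq_empty_iff_forall_notMem.mp hd a ⟨haI, h⟩
    have hCuniv : ({a, b} : Set (Fin n)) ≠ Set.univ := by
      intro hC
      apply hIw
      apply vertex_eq_of_suppI_eq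
      have hwa : suppI w.1 = {a} := by
        apply Set.eq_singleton_iff_nonempty_unique_mem.mpr
        refine ⟨⟨a, haw⟩, fun c hc => ?_⟩
        have : c ∈ ({a, b} : Set (Fin n)) := hC ▸ Set.mem_univ c
        rcases this with h | h
        · exact h
        · exact absurd (h ▸ hc) hbw
      have hIa : suppI I.1 = {a} := by
        apply Set.eq_singleton_iff_nonempty_unique_mem.mpr
        refine ⟨⟨a, haI⟩, fun c hc => ?_⟩
        have : c ∈ ({a, b} : Set (Fin n)) := hC ▸ Set.mem_univ c
        rcases this with h | h
        · exact h
        · exact absurd (h ▸ hc) hbI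
      rw [hIa, hwa]
    set C : NontrivialIdeal (∀ i, F i) :=
      vtx F {a, b} ⟨a, Set.mem_insert a _⟩ hCuniv with hCdef
    have hJC : G.Adj J C := by
      rw [adj_iff]
      constructor
      · apply vertex_ne_of_suppI_ne
        rw [hCdef, suppI_vtx (F := F) ⟨a, Set.mem_insert a _⟩ hCuniv]
        intro h
        exact haJ (h ▸ Set.mem_insert a _)
      · exact ⟨b, hbJ, by rw [hCdef, suppI_vtx (F := F) ⟨a, Set.mem_insert a _⟩ hCuniv]; exact Set.mem_insert_of_mem a rfl⟩
    have hCw : G.Adj C w := by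
      rw [adj_iff]
      constructor
      · apply vertex_ne_of_suppI_ne
        rw [hCdef, suppI_vtx (F := F) ⟨a, Set.mem_insert a _⟩ hCuniv]
        intro h
        exact hbw (h ▸ Set.mem_insert_of_mem a rfl)
      · exact ⟨a, by rw [hCdef, suppI_vtx (F := F) ⟨a, Set.mem_insert a _⟩ hCuniv]; exact Set.mem_insert a _, haw⟩
    calc G.edist J w ≤ G.edist J C + G.edist C w := G.edist_triangle
      _ = 1 + 1 := by
        rw [SimpleGraph.edist_eq_one_iff_adj.mpr hJC, SimpleGraph.edist_eq_one_iff_adj.mpr hCw]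
      _ ≤ G.edist I J := by rw [show (1:ℕ∞)+1 = 2 by norm_num]; exact h2

lemma mmd_of_disjoint {I J : NontrivialIdeal (∀ i, F i)} (hne : I ≠ J)
    (hd : suppI I.1 ∩ suppI J.1 = ∅) :
    MutuallyMaximallyDistant (intersectionGraph (∀ i, F i)) I J := by
  refine ⟨hne, mmd_half hne hd, fun w hw => ?_⟩
  rw [(intersectionGraph (∀ i, F i)).edist_comm (u := I) (v := J)]
  exact mmd_half (Ne.symm hne) (by rw [Set.inter_comm]; exact hd) w hw

/-- Derive a contradiction from one MMD clause when both supports contain `i0`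
but `a` separates them. -/
lemma not_mmd_aux {i0 : Fin n} {I J : NontrivialIdeal (∀ i, F i)}
    (h0I : i0 ∈ suppI I.1) (h0J : i0 ∈ suppI J.1) {a : Fin n}
    (haI : a ∈ suppI I.1) (haJ : a ∉ suppI J.1)
    (h1 : ∀ w, (intersectionGraph (∀ i, F i)).Adj I w →
      (intersectionGraph (∀ i, F i)).edist J w ≤ (intersectionGraph (∀ i, F i)).edist I J)
    (hd1 : (intersectionGraph (∀ i, F i)).edist I J = 1) : False := by
  set G := intersectionGraph (∀ i, F i)
  have hcne : ((suppI J.1)ᶜ : Set (Fin n)).Nonempty := ⟨a, haJ⟩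
  have hcuniv : ((suppI J.1)ᶜ : Set (Fin n)) ≠ Set.univ := fun h =>
    (Set.eq_univ_iff_forall.mp h i0) h0J
  set w := vtx F (suppI J.1)ᶜ hcne hcuniv with hwdef
  have hIw : G.Adj I w := adj_iff.mpr ⟨vertex_ne_of_suppI_ne (by
      rw [hwdef, suppI_vtx]
      intro h
      exact (h ▸ h0I : i0 ∈ (suppI J.1)ᶜ) h0J),
    ⟨a, haI, by rw [hwdef, suppI_vtx]; exact haJ⟩⟩
  have hle := h1 w hIw
  rw [hd1] at hle
  have h2le : 2 ≤ G.edist J w := two_le_edist_of_not_adj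
    (vertex_ne_of_suppI_ne (by
      rw [hwdef, suppI_vtx]
      intro h
      exact (h ▸ h0J : i0 ∈ (suppI J.1)ᶜ) h0J))
    (by
      rw [adj_iff]
      rintro ⟨-, c, hcJ, hcw⟩
      rw [hwdef, suppI_vtx] at hcw
      exact hcw hcJ)
  exact absurd (le_trans h2le hle) (by norm_num)

/-- vertices whose supports both contain `i0` are never mutually maximally distant. -/
lemma not_mmd {i0 : Fin n} {I J : NontrivialIdeal (∀ i, F i)}
    (h0I : i0 ∈ suppI I.1) (h0J : i0 ∈ suppI J.1) (hne : I ≠ J) :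
    ¬ MutuallyMaximallyDistant (intersectionGraph (∀ i, F i)) I J := by
  set G := intersectionGraph (∀ i, F i)
  rintro ⟨-, h1, h2⟩
  have hadj : G.Adj I J := adj_iff.mpr ⟨hne, i0, h0I, h0J⟩
  have hd1 : G.edist I J = 1 := SimpleGraph.edist_eq_one_iff_adj.mpr hadj
  have hsne : suppI I.1 ≠ suppI J.1 := fun h => hne (vertex_eq_of_suppI_eq h)
  by_cases hsub : suppI I.1 ⊆ suppI J.1
  · have : ¬ suppI J.1 ⊆ suppI I.1 := fun h => hsne (Set.Subset.antisymm hsub h)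
    obtain ⟨a, haJ, haI⟩ := Set.not_subset.mp this
    exact not_mmd_aux h0J h0I haJ haI (fun w hw => by
      rw [G.edist_comm (u := J)]; exact h2 w hw) (by rw [G.edist_comm (u := J)]; exact hd1)
  · obtain ⟨a, haI, haJ⟩ := Set.not_subset.mp hsub
    exact not_mmd_aux h0I h0J haI haJ h1 hd1

end GraphAux

section CountAux
open scoped symmDiff

lemma ncard_mem_sets {α : Type*} [Fintype α] (i0 : α) :
    {A : Set α | i0 ∈ A}.ncard = 2 ^ (Fintype.card α - 1) := by
  have hinj : Function.Injective (fun A : Set α => A ∆ {i0}) := fun A B h => by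
    have := congrArg (fun C : Set α => C ∆ ({i0} : Set α)) h
    simpa only [symmDiff_symmDiff_cancel_right] using this
  have himg : (fun A : Set α => A ∆ {i0}) '' {A | i0 ∈ A} = {A : Set α | i0 ∈ A}ᶜ := by
    ext B
    simp only [Set.mem_image, Set.mem_setOf_eq, Set.mem_compl_iff]
    constructor
    · rintro ⟨A, hA, rfl⟩
      simp [Set.mem_symmDiff, hA]
    · intro hB
      exact ⟨B ∆ {i0}, by simp [Set.mem_symmDiff, hB], symmDiff_symmDiff_cancel_right _ _⟩
  have h1 : {A : Set α | i0 ∈ A}.ncard = ({A : Set α | i0 ∈ A}ᶜ).ncard := by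
    rw [← himg, Set.ncard_image_of_injective _ hinj]
  have h2 := Set.ncard_add_ncard_compl {A : Set α | i0 ∈ A}
  rw [Nat.card_eq_fintype_card, Fintype.card_set] at h2
  obtain ⟨m, hm⟩ : ∃ m, Fintype.card α = m + 1 :=
    ⟨Fintype.card α - 1, by have : 0 < Fintype.card α := Fintype.card_pos_iff.mpr ⟨i0⟩; omega⟩
  rw [hm] at h2 ⊢
  rw [pow_succ] at h2
  simp only [Nat.add_sub_cancel]
  omega

lemma family_bound {α : Type*} [Fintype α] [Nonempty α] (T : Set (Set α))
    (hne : ∀ A ∈ T, A.Nonempty) (hnu : ∀ A ∈ T, A ≠ Set.univ)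
    (hint : ∀ A ∈ T, ∀ B ∈ T, (A ∩ B).Nonempty) :
    2 * T.ncard ≤ 2 ^ Fintype.card α - 2 := by
  have hdisj : Disjoint T (compl '' T) := by
    rw [Set.disjoint_left]
    rintro B hB ⟨A, hA, rfl⟩
    obtain ⟨x, hx1, hx2⟩ := hint Aᶜ hB A hA
    exact hx1 hx2
  have hcard : (compl '' T).ncard = T.ncard := Set.ncard_image_of_injective _ compl_injective
  have hsub : T ∪ compl '' T ⊆ {A : Set α | A ≠ ∅ ∧ A ≠ Set.univ} := by
    rintro B (hB | ⟨A, hA, rfl⟩)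
    · exact ⟨(hne B hB).ne_empty, hnu B hB⟩
    · exact ⟨fun h => hnu A hA (Set.compl_empty_iff.mp h),
        fun h => (hne A hA).ne_empty (Set.compl_univ_iff.mp h)⟩
  have htarget : {A : Set α | A ≠ ∅ ∧ A ≠ Set.univ}.ncard = 2 ^ Fintype.card α - 2 := by
    have he : {A : Set α | A ≠ ∅ ∧ A ≠ Set.univ} = ({∅, Set.univ} : Set (Set α))ᶜ := by
      ext A
      simp only [Set.mem_setOf_eq, Set.mem_compl_iff, Set.mem_insert_iff,
        Set.mem_singleton_iff, not_or]
    rw [he]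
    have h2 := Set.ncard_add_ncard_compl ({∅, Set.univ} : Set (Set α))
    rw [Nat.card_eq_fintype_card, Fintype.card_set,
      Set.ncard_pair (Set.empty_ne_univ)] at h2
    omega
  calc 2 * T.ncard = T.ncard + (compl '' T).ncard := by rw [hcard]; ring
    _ = (T ∪ compl '' T).ncard :=
        (Set.ncard_union_eq hdisj (Set.toFinite _) (Set.toFinite _)).symm
    _ ≤ {A : Set α | A ≠ ∅ ∧ A ≠ Set.univ}.ncard :=
        Set.ncard_le_ncard hsub (Set.toFinite _)
    _ = 2 ^ Fintype.card α - 2 := htarget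

end CountAux

theorem statement4 (n : ℕ) (hn : 2 ≤ n) (F : Fin n → Type*) [∀ i, Field (F i)] :
    IsGreatest {k : ℕ | ∃ S : Set (NontrivialIdeal (∀ i, F i)), S.Finite ∧
        (∀ I ∈ S, ∀ J ∈ S, I ≠ J →
          ¬ MutuallyMaximallyDistant (intersectionGraph (∀ i, F i)) I J) ∧
        S.ncard = k} (2 ^ (n - 1) - 1) := by
  have hn0 : 0 < n := by omega
  set i0 : Fin n := ⟨0, hn0⟩ with hi0
  constructor
  · -- membership: the family of ideals whose support contains i0
    refine ⟨{I : NontrivialIdeal (∀ i, F i) | i0 ∈ suppI I.1}, ?_, ?_, ?_⟩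
    · refine Set.Finite.of_finite_image (f := fun I : NontrivialIdeal (∀ i, F i) => suppI I.1)
        ?_ ?_
      · set_option synthInstance.maxHeartbeats 1000000 in
        exact Set.toFinite _
      · exact fun I _ J _ h => Subtype.ext (suppI_injective h)
    · exact fun I hI J hJ hne => not_mmd hI hJ hne
    · have hinj : Set.InjOn (fun I : NontrivialIdeal (∀ i, F i) => suppI I.1)
          {I : NontrivialIdeal (∀ i, F i) | i0 ∈ suppI I.1} :=
        fun I _ J _ h => Subtype.ext (suppI_injective h)
      rw [← Set.ncard_image_of_injOn hinj]
      have himg : (fun I : NontrivialIdeal (∀ i, F i) => suppI I.1) ''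
            {I : NontrivialIdeal (∀ i, F i) | i0 ∈ suppI I.1}
          = {A : Set (Fin n) | i0 ∈ A} \ {Set.univ} := by
        ext A
        simp only [Set.mem_image, Set.mem_setOf_eq, Set.mem_diff, Set.mem_singleton_iff]
        constructor
        · rintro ⟨I, hI, rfl⟩
          exact ⟨hI, suppI_ne_univ I.2.2⟩
        · rintro ⟨h0, hu⟩
          exact ⟨vtx F A ⟨i0, h0⟩ hu, by show i0 ∈ suppI (vtx F A ⟨i0, h0⟩ hu).1; rw [suppI_vtx (F := F) ⟨i0, h0⟩ hu]; exact h0, suppI_vtx _ _⟩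
      rw [himg, Set.ncard_diff_singleton_of_mem (show Set.univ ∈ {A : Set (Fin n) | i0 ∈ A} from Set.mem_univ i0),
        ncard_mem_sets i0, Fintype.card_fin]
  · -- upper bound
    rintro k ⟨S, hfin, hmmd, rfl⟩
    haveI : Nonempty (Fin n) := ⟨i0⟩
    have hinj : Set.InjOn (fun I : NontrivialIdeal (∀ i, F i) => suppI I.1) S :=
      fun I _ J _ h => Subtype.ext (suppI_injective h)
    rw [← Set.ncard_image_of_injOn hinj]
    have hb := family_bound ((fun I : NontrivialIdeal (∀ i, F i) => suppI I.1) '' S)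
      (by rintro A ⟨I, _, rfl⟩; exact suppI_nonempty I.2.1)
      (by rintro A ⟨I, _, rfl⟩; exact suppI_ne_univ I.2.2)
      (by
        rintro A ⟨I, hI, rfl⟩ B ⟨J, hJ, rfl⟩
        rcases eq_or_ne I J with rfl | hne
        · rw [Set.inter_self]
          exact suppI_nonempty I.2.1
        · rw [Set.nonempty_iff_ne_empty]
          intro h
          exact hmmd I hI J hJ hne (mmd_of_disjoint hne h))
    rw [Fintype.card_fin] at hb
    obtain ⟨m, hm⟩ : ∃ m, n = m + 1 := ⟨n - 1, by omega⟩
    have e1 : 2 ^ n = 2 * 2 ^ (n - 1) := by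
      rw [hm, pow_succ, Nat.add_sub_cancel, mul_comm]
    have e2 : 1 ≤ 2 ^ (n - 1) := Nat.one_le_two_pow
    omega
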